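/- Let V be a real inner product space, e₁, e₂ ∈ V orthonormal, and f : V → ℝ absolutely homogeneous of degree 1 with f(e₁) = f(e₂). Suppose there is a function F such that f(u + v) = F(⟨u,u⟩, ⟨u,v⟩, ⟨v,v⟩, f(u), f(v)) for all u, v ∈ V. Define T : ℝ → ℝ by T(φ) = f(cos(φ)e₁ + sin(φ)e₂). Then T(φ) = T(φ + π/2) for all φ ∈ ℝ. -/

import Mathlib

open scoped RealInnerProductSpace

theorem stmt6 {V : Type*} [NormedAddCommGroup V] [InnerProductSpace ℝ V]
    (e₁ e₂ : V) (he₁ : ‖e₁‖ = 1) (he₂ : ‖e₂‖ = 1) (horth : ⟪e₁, e₂⟫ = 0)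
    (f : V → ℝ)
    (hhom : ∀ (l : ℝ) (v : V), f (l • v) = |l| * f v)
    (heq : f e₁ = f e₂)
    (F : ℝ → ℝ → ℝ → ℝ → ℝ → ℝ)
    (hF : ∀ u v : V, f (u + v) = F ⟪u, u⟫ ⟪u, v⟫ ⟪v, v⟫ (f u) (f v))
    (T : ℝ → ℝ)
    (hT : ∀ φ : ℝ, T φ = f (Real.cos φ • e₁ + Real.sin φ • e₂)) :
    ∀ φ : ℝ, T φ = T (φ + Real.pi / 2) := by
  intro φ
  have h11 : ⟪e₁, e₁⟫ = (1:ℝ) := by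
    rw [real_inner_self_eq_norm_sq, he₁]; norm_num
  have h22 : ⟪e₂, e₂⟫ = (1:ℝ) := by
    rw [real_inner_self_eq_norm_sq, he₂]; norm_num
  have horth' : ⟪e₂, e₁⟫ = (0:ℝ) := by
    rw [real_inner_comm]; exact horth
  rw [hT, hT, Real.cos_add_pi_div_two, Real.sin_add_pi_div_two]
  rw [add_comm ((-Real.sin φ) • e₁) (Real.cos φ • e₂)] at *
  rw [hF, hF]
  simp [inner_smul_left, inner_smul_right, h11, h22, horth, horth', hhom, heq,
    abs_neg, mul_comm]
  rw [← neg_smul, hhom, abs_neg, heq, mul_comm]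
  ring_nf
  simp [norm_smul, he₁, he₂]
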